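/- Let N ≥ 1, κ ≥ 0, let ã and B be bilinear forms on ℝ^N, let d ∈ ℝ^N have strictly positive entries defining s(v,w) = Σᵢ dᵢ vᵢ wᵢ, and let ‖·‖ be the Euclidean norm. Assume: (i) there exists c > 0 such that ã(v⁺ − w⁺, v − w) + s(v⁻ − w⁻, v − w) ≥ c‖v − w‖² for all v, w ∈ ℝ^N; and (ii) the combined form a := ã + B is coercive, i.e., there exists c₀ > 0 with ã(v,v) + B(v,v) ≥ c₀‖v‖² for all v. Then for every linear functional f : ℝ^N → ℝ there exists a unique u ∈ ℝ^N such that ã(u⁺, v) + B(u⁺, v) + s(u⁻, v) = f(v) for all v ∈ ℝ^N. -/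

import Mathlib

open scoped BigOperators

/-- Componentwise clipping to `[0, κ]` on Euclidean space. -/
noncomputable def clipE {N : ℕ} (κ : ℝ) (v : EuclideanSpace ℝ (Fin N)) :
    EuclideanSpace ℝ (Fin N) :=
  WithLp.toLp 2 (fun i => max 0 (min (v i) κ))

/-- scalar clipping is 1-Lipschitz -/
lemma clip_scalar_lip (κ a b : ℝ) :
    |max 0 (min a κ) - max 0 (min b κ)| ≤ |a - b| := by
  calc |max 0 (min a κ) - max 0 (min b κ)|
      ≤ max |0 - 0| |min a κ - min b κ| := abs_max_sub_max_le_max 0 (min a κ) 0 (min b κ)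
    _ ≤ |a - b| := by
        simp only [sub_self, abs_zero, max_le_iff]
        constructor
        · positivity
        · exact (abs_min_sub_min_le_max a κ b κ).trans (by simp [abs_nonneg])

/-- complementarity of the clipping decomposition, scalar version -/
lemma clip_scalar_comp (κ a : ℝ) (hκ : 0 ≤ κ) :
    (max 0 (min a κ) < a → max 0 (min a κ) = κ) ∧
    (a < max 0 (min a κ) → max 0 (min a κ) = 0) ∧
    0 ≤ max 0 (min a κ) ∧ max 0 (min a κ) ≤ κ := by
  refine ⟨?_, ?_, le_max_left _ _, max_le hκ (min_le_right _ _)⟩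
  · intro h
    have h1 : min a κ < a := lt_of_le_of_lt (le_max_right 0 (min a κ)) h
    have : κ < a := by
      by_contra hk
      simp [min_eq_left (not_lt.mp hk)] at h1
    rw [min_eq_right this.le, max_eq_right hκ]
  · intro h
    rcases max_choice 0 (min a κ) with h0 | h0
    · exact h0
    · exfalso; rw [h0] at h; exact absurd (min_le_left a κ) (not_le.mpr h)

/-- the sign lemma: monotone coupling of clipped and residual parts -/
lemma clip_sign (κ a a' b b' : ℝ)
    (h1 : 0 < a → b = κ) (h2 : a < 0 → b = 0)
    (h1' : 0 < a' → b' = κ) (h2' : a' < 0 → b' = 0)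
    (hb0 : 0 ≤ b) (hbκ : b ≤ κ) (hb0' : 0 ≤ b') (hbκ' : b' ≤ κ) :
    0 ≤ (a - a') * (b - b') := by
  rcases lt_trichotomy a a' with h | h | h
  · have hbb : b ≤ b' := by
      rcases lt_or_ge 0 a' with ha' | ha'
      · rw [h1' ha']; exact hbκ
      · rw [h2 (lt_of_lt_of_le h ha')]; exact hb0'
    have := mul_nonneg (sub_nonneg.mpr (le_of_lt h)) (sub_nonneg.mpr hbb)
    nlinarith
  · simp [h]
  · have hbb : b' ≤ b := by
      rcases lt_or_ge 0 a with ha | ha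
      · rw [h1 ha]; exact hbκ'
      · rw [h2' (lt_of_lt_of_le h ha)]; exact hb0
    exact mul_nonneg (sub_nonneg.mpr (le_of_lt h)) (sub_nonneg.mpr hbb)

/-- clipping is 1-Lipschitz on Euclidean space -/
lemma clipE_lip {N : ℕ} (κ : ℝ) (v w : EuclideanSpace ℝ (Fin N)) :
    ‖clipE κ v - clipE κ w‖ ≤ ‖v - w‖ := by
  rw [EuclideanSpace.norm_eq, EuclideanSpace.norm_eq]
  apply Real.sqrt_le_sqrt
  apply Finset.sum_le_sum
  intro i _
  have h1 : (clipE κ v - clipE κ w) i = clipE κ v i - clipE κ w i := PiLp.sub_apply _ _ _ _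
  have h2 : (v - w) i = v i - w i := PiLp.sub_apply _ _ _ _
  rw [h1, h2, Real.norm_eq_abs, Real.norm_eq_abs]
  have habs : |clipE κ v i - clipE κ w i| ≤ |v i - w i| := clip_scalar_lip κ (v i) (w i)
  exact pow_le_pow_left₀ (abs_nonneg _) habs 2

set_option maxHeartbeats 2000000 in
theorem bpm_wellposed (N : ℕ) (hN : 1 ≤ N) (κ : ℝ) (hκ : 0 ≤ κ)
    (A B : EuclideanSpace ℝ (Fin N) →ₗ[ℝ] EuclideanSpace ℝ (Fin N) →ₗ[ℝ] ℝ)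
    (d : Fin N → ℝ) (hd : ∀ i, 0 < d i)
    (s : EuclideanSpace ℝ (Fin N) → EuclideanSpace ℝ (Fin N) → ℝ)
    (hs : ∀ v w : EuclideanSpace ℝ (Fin N), s v w = ∑ i, d i * v i * w i)
    (c : ℝ) (hc : 0 < c)
    (hmono : ∀ v w : EuclideanSpace ℝ (Fin N),
      c * ‖v - w‖ ^ 2 ≤
        A (clipE κ v - clipE κ w) (v - w)
          + s ((v - clipE κ v) - (w - clipE κ w)) (v - w))
    (c₀ : ℝ) (hc₀ : 0 < c₀)
    (hcoer : ∀ v : EuclideanSpace ℝ (Fin N), c₀ * ‖v‖ ^ 2 ≤ A v v + B v v) :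
    ∀ f : EuclideanSpace ℝ (Fin N) →ₗ[ℝ] ℝ,
      ∃! u : EuclideanSpace ℝ (Fin N),
        ∀ v : EuclideanSpace ℝ (Fin N),
          A (clipE κ u) v + B (clipE κ u) v + s (u - clipE κ u) v = f v := by
  intro f
  classical
  -- the operator T with ⟪T x, v⟫ = A x v + B x v
  obtain ⟨T, hT⟩ : ∃ T : EuclideanSpace ℝ (Fin N) →ₗ[ℝ] EuclideanSpace ℝ (Fin N),
      ∀ x v : EuclideanSpace ℝ (Fin N), (inner ℝ (T x) v : ℝ) = A x v + B x v := by
    refine ⟨{ toFun := fun x =>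
                (InnerProductSpace.toDual ℝ (EuclideanSpace ℝ (Fin N))).symm
                  ((A x + B x).toContinuousLinearMap),
              map_add' := ?_, map_smul' := ?_ }, ?_⟩
    · intro x y; simp only [map_add]; abel
    · intro r x
      simp only [map_smul, RingHom.id_apply, ← smul_add]
    · intro x v
      simp only [LinearMap.coe_mk, AddHom.coe_mk]
      rw [InnerProductSpace.toDual_symm_apply]
      simp
  -- the vector F with ⟪F, v⟫ = f v
  obtain ⟨F, hF⟩ : ∃ F : EuclideanSpace ℝ (Fin N),
      ∀ v : EuclideanSpace ℝ (Fin N), (inner ℝ F v : ℝ) = f v := by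
    refine ⟨(InnerProductSpace.toDual ℝ (EuclideanSpace ℝ (Fin N))).symm
      (f.toContinuousLinearMap), ?_⟩
    intro v
    rw [InnerProductSpace.toDual_symm_apply]
    simp
  -- the diagonal operator
  obtain ⟨D, hD⟩ : ∃ D : EuclideanSpace ℝ (Fin N) → EuclideanSpace ℝ (Fin N),
      ∀ (z : EuclideanSpace ℝ (Fin N)) (i : Fin N), D z i = d i * z i :=
    ⟨fun z => (WithLp.toLp 2 (fun i => d i * z i) : EuclideanSpace ℝ (Fin N)), fun z i => rfl⟩
  have hDs : ∀ z v : EuclideanSpace ℝ (Fin N), (inner ℝ (D z) v : ℝ) = s z v := by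
    intro z v
    rw [hs, PiLp.inner_apply]
    apply Finset.sum_congr rfl
    intro i _
    rw [RCLike.inner_apply', hD]
    simp [mul_assoc]
  -- reformulation of the equation
  have hchar : ∀ u : EuclideanSpace ℝ (Fin N),
      (∀ v : EuclideanSpace ℝ (Fin N),
        A (clipE κ u) v + B (clipE κ u) v + s (u - clipE κ u) v = f v)
        ↔ T (clipE κ u) + D (u - clipE κ u) = F := by
    intro u
    constructor
    · intro h
      apply ext_inner_right ℝ
      intro v
      rw [inner_add_left, hT, hDs, hF, h v]
    · intro h v
      have := congrArg (fun x : EuclideanSpace ℝ (Fin N) => (inner ℝ x v : ℝ)) h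
      simp only [inner_add_left] at this
      rw [hT, hDs, hF] at this
      exact this
  -- basic facts about T: Lipschitz constant and coercivity
  set Tc : EuclideanSpace ℝ (Fin N) →L[ℝ] EuclideanSpace ℝ (Fin N) :=
    LinearMap.toContinuousLinearMap T with hTc
  set L : ℝ := ‖Tc‖ + 1 with hLdef
  have hL0 : 0 < L := by positivity
  have hTle' : ∀ x : EuclideanSpace ℝ (Fin N), ‖T x‖ ≤ ‖Tc‖ * ‖x‖ := fun x => Tc.le_opNorm x
  have hTle : ∀ x : EuclideanSpace ℝ (Fin N), ‖T x‖ ≤ L * ‖x‖ := by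
    intro x
    have h1 := hTle' x
    nlinarith [norm_nonneg x]
  have hcoerT : ∀ x : EuclideanSpace ℝ (Fin N), c₀ * ‖x‖ ^ 2 ≤ (inner ℝ (T x) x : ℝ) := by
    intro x; rw [hT]; exact hcoer x
  have hc₀L : c₀ < L := by
    set v₀ : EuclideanSpace ℝ (Fin N) := EuclideanSpace.single (⟨0, hN⟩ : Fin N) (1 : ℝ) with hv₀
    have hn : ‖v₀‖ = 1 := by
      rw [hv₀, EuclideanSpace.norm_single, norm_one]
    have h1 : c₀ * ‖v₀‖ ^ 2 ≤ (inner ℝ (T v₀) v₀ : ℝ) := hcoerT v₀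
    have h2 : (inner ℝ (T v₀) v₀ : ℝ) ≤ ‖T v₀‖ * ‖v₀‖ := real_inner_le_norm _ _
    have h3 : ‖T v₀‖ ≤ ‖Tc‖ * ‖v₀‖ := hTle' v₀
    rw [hn] at h1 h2 h3
    simp only [mul_one, one_pow] at h1 h2 h3
    rw [hLdef]
    linarith
  -- the contraction parameters
  set ρ : ℝ := c₀ / L ^ 2 with hρdef
  have hρ0 : 0 < ρ := by positivity
  have hL2ne : (L : ℝ) ^ 2 ≠ 0 := by positivity
  have hk2 : 1 - 2 * ρ * c₀ + ρ ^ 2 * L ^ 2 = 1 - c₀ ^ 2 / L ^ 2 := by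
    rw [hρdef]
    field_simp
    ring
  set k2 : ℝ := 1 - c₀ ^ 2 / L ^ 2 with hk2def
  have hk2nonneg : 0 ≤ k2 := by
    rw [hk2def]
    have hsq : c₀ ^ 2 ≤ L ^ 2 := by nlinarith
    have hL2 : (0:ℝ) < L ^ 2 := by positivity
    rw [sub_nonneg, div_le_one hL2]
    exact hsq
  have hk2lt : k2 < 1 := by
    rw [hk2def]
    have : 0 < c₀ ^ 2 / L ^ 2 := by positivity
    linarith
  -- the key contraction estimate
  have hkey : ∀ x y : EuclideanSpace ℝ (Fin N),
      ‖(x - ρ • (T x - F)) - (y - ρ • (T y - F))‖ ^ 2 ≤ k2 * ‖x - y‖ ^ 2 := by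
    intro x y
    have heq : (x - ρ • (T x - F)) - (y - ρ • (T y - F)) = (x - y) - ρ • T (x - y) := by
      rw [map_sub]
      module
    rw [heq]
    have h1 : ‖(x - y) - ρ • T (x - y)‖ ^ 2
        = ‖x - y‖ ^ 2 - 2 * (ρ * (inner ℝ (x - y) (T (x - y)) : ℝ)) + ‖ρ • T (x - y)‖ ^ 2 := by
      rw [norm_sub_sq_real, real_inner_smul_right]
    rw [h1]
    have h2 : (inner ℝ (x - y) (T (x - y)) : ℝ) = (inner ℝ (T (x - y)) (x - y) : ℝ) :=
      real_inner_comm _ _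
    have h3 : c₀ * ‖x - y‖ ^ 2 ≤ (inner ℝ (x - y) (T (x - y)) : ℝ) := by
      rw [h2]; exact hcoerT (x - y)
    have h4 : ‖ρ • T (x - y)‖ ^ 2 ≤ ρ ^ 2 * L ^ 2 * ‖x - y‖ ^ 2 := by
      rw [norm_smul]
      have h5 : ‖T (x - y)‖ ≤ L * ‖x - y‖ := hTle (x - y)
      have h6 : ‖ρ‖ = ρ := by rw [Real.norm_eq_abs, abs_of_pos hρ0]
      rw [h6]
      have h7 : ‖T (x - y)‖ ^ 2 ≤ (L * ‖x - y‖) ^ 2 :=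
        pow_le_pow_left₀ (norm_nonneg _) h5 2
      calc (ρ * ‖T (x - y)‖) ^ 2 = ρ ^ 2 * ‖T (x - y)‖ ^ 2 := by ring
        _ ≤ ρ ^ 2 * (L * ‖x - y‖) ^ 2 := by nlinarith [sq_nonneg ρ]
        _ = ρ ^ 2 * L ^ 2 * ‖x - y‖ ^ 2 := by ring
    have hfin : ‖x - y‖ ^ 2 - 2 * (ρ * (inner ℝ (x - y) (T (x - y)) : ℝ)) + ‖ρ • T (x - y)‖ ^ 2
        ≤ (1 - 2 * ρ * c₀ + ρ ^ 2 * L ^ 2) * ‖x - y‖ ^ 2 := by nlinarith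
    rw [hk2] at hfin
    linarith
  -- the contraction map
  set g : EuclideanSpace ℝ (Fin N) → EuclideanSpace ℝ (Fin N) :=
    fun y => clipE κ (y - ρ • (T y - F)) with hg
  set k : NNReal := ⟨Real.sqrt k2, Real.sqrt_nonneg k2⟩ with hkdef
  have hk1 : k < 1 := by
    rw [← NNReal.coe_lt_coe]
    show Real.sqrt k2 < 1
    nlinarith [Real.sq_sqrt hk2nonneg, Real.sqrt_nonneg k2]
  have hglip : LipschitzWith k g := by
    apply LipschitzWith.of_dist_le_mul
    intro x y
    rw [dist_eq_norm, dist_eq_norm]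
    have h1 : ‖g x - g y‖ ≤ ‖(x - ρ • (T x - F)) - (y - ρ • (T y - F))‖ := clipE_lip κ _ _
    have h2 := hkey x y
    have h3 : ‖(x - ρ • (T x - F)) - (y - ρ • (T y - F))‖ ≤ Real.sqrt k2 * ‖x - y‖ := by
      nlinarith [norm_nonneg ((x - ρ • (T x - F)) - (y - ρ • (T y - F))), norm_nonneg (x - y),
        Real.sq_sqrt hk2nonneg, Real.sqrt_nonneg k2,
        mul_nonneg (Real.sqrt_nonneg k2) (norm_nonneg (x - y))]
    exact h1.trans h3
  have hcontr : ContractingWith k g := ⟨hk1, hglip⟩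
  obtain ⟨y, hyfix, -⟩ := hcontr.exists_fixedPoint 0 (edist_ne_top _ _)
  have hyfix' : clipE κ (y - ρ • (T y - F)) = y := hyfix
  -- the residual
  set z : EuclideanSpace ℝ (Fin N) :=
    (WithLp.toLp 2 (fun i => (F i - T y i) / d i) : EuclideanSpace ℝ (Fin N)) with hz
  set u : EuclideanSpace ℝ (Fin N) := y + z with hu
  have huz : u - y = z := by rw [hu]; abel
  -- componentwise fixed point identity
  have hyi : ∀ i, y i = max 0 (min (y i - ρ * (T y i - F i)) κ) := by
    intro i
    conv_lhs => rw [← hyfix']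
    show max 0 (min ((y - ρ • (T y - F)) i) κ) = _
    have harg : (y - ρ • (T y - F)) i = y i - ρ * (T y i - F i) := by
      rw [PiLp.sub_apply, PiLp.smul_apply, PiLp.sub_apply]
      simp [smul_eq_mul]
    rw [harg]
  have hclipu : clipE κ u = y := by
    ext i
    show max 0 (min (u i) κ) = y i
    have hui : u i = y i + z i := PiLp.add_apply _ _ _ _
    have hzi : z i = (F i - T y i) / d i := rfl
    have hdi := hd i
    rcases lt_trichotomy (T y i - F i) 0 with ht | ht | ht
    · -- t < 0 : z i > 0, y i = κ
      have hzpos : 0 < z i := by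
        rw [hzi]
        apply div_pos _ hdi
        linarith
      have hyκ : y i = κ := by
        by_contra hne
        have hyle : y i ≤ κ := by
          rw [hyi i]; exact max_le hκ (min_le_right _ _)
        have hylt : y i < κ := lt_of_le_of_ne hyle hne
        have harg : y i < y i - ρ * (T y i - F i) := by nlinarith
        have hmin : y i < min (y i - ρ * (T y i - F i)) κ := lt_min harg hylt
        have hfinal : y i < max 0 (min (y i - ρ * (T y i - F i)) κ) :=
          lt_of_lt_of_le hmin (le_max_right _ _)
        rw [← hyi i] at hfinal
        exact lt_irrefl _ hfinal
      have huκ : κ ≤ u i := by rw [hui, hyκ]; linarith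
      rw [hui, hyκ]
      rw [min_eq_right (by rw [hui, hyκ] at huκ; exact huκ), max_eq_right hκ]
    · -- t = 0 : z i = 0, u i = y i ∈ [0, κ]
      have hz0 : z i = 0 := by
        rw [hzi]
        have hFT : F i - T y i = 0 := by linarith
        rw [hFT, zero_div]
      rw [hui, hz0, add_zero]
      exact ((hyi i).trans (by rw [ht, mul_zero, sub_zero])).symm
    · -- t > 0 : z i < 0, y i = 0
      have hzneg : z i < 0 := by
        rw [hzi]
        apply div_neg_of_neg_of_pos _ hdi
        linarith
      have hy0 : y i = 0 := by
        by_contra hne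
        have hyge : 0 ≤ y i := by rw [hyi i]; exact le_max_left _ _
        have hypos : 0 < y i := lt_of_le_of_ne hyge (Ne.symm hne)
        have harg : y i - ρ * (T y i - F i) < y i := by nlinarith
        have hmax := hyi i
        rcases max_choice 0 (min (y i - ρ * (T y i - F i)) κ) with h0 | h0
        · rw [h0] at hmax; exact hne hmax
        · rw [h0] at hmax
          have hminle : min (y i - ρ * (T y i - F i)) κ ≤ y i - ρ * (T y i - F i) :=
            min_le_left _ _
          rw [← hmax] at hminle
          linarith
      have hule : u i ≤ 0 := by rw [hui, hy0]; linarith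
      rw [hui, hy0, zero_add]
      have hmz : min (z i) κ = z i := min_eq_left (by linarith)
      rw [hmz, max_eq_left (by linarith)]
  -- the vector equation holds for u
  have hequ : T (clipE κ u) + D (u - clipE κ u) = F := by
    rw [hclipu, huz]
    ext i
    have h1 : (T y + D z) i = T y i + D z i := PiLp.add_apply _ _ _ _
    rw [h1]
    rw [hD]
    have hzi : z i = (F i - T y i) / d i := rfl
    rw [hzi]
    have hdi : d i ≠ 0 := (hd i).ne'
    field_simp
    ring
  -- conclusion
  refine ⟨u, (hchar u).mpr hequ, ?_⟩
  intro u' hu'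
  have hequ' : T (clipE κ u') + D (u' - clipE κ u') = F := (hchar u').mp hu'
  set y1 : EuclideanSpace ℝ (Fin N) := clipE κ u' with hy1
  set y2 : EuclideanSpace ℝ (Fin N) := clipE κ u with hy2
  set z1 : EuclideanSpace ℝ (Fin N) := u' - y1 with hz1
  set z2 : EuclideanSpace ℝ (Fin N) := u - y2 with hz2
  have heqdiff : T y1 - T y2 + (D z1 - D z2) = 0 := by
    have hh : T y1 + D z1 - (T y2 + D z2) = F - F := by rw [hequ', hequ]
    rw [sub_self] at hh
    rw [← hh]; abel
  -- the coupling term is nonnegative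
  have hcomp : ∀ (w : EuclideanSpace ℝ (Fin N)) (i : Fin N),
      (0 < (w - clipE κ w) i → clipE κ w i = κ) ∧
      ((w - clipE κ w) i < 0 → clipE κ w i = 0) ∧
      0 ≤ clipE κ w i ∧ clipE κ w i ≤ κ := by
    intro w i
    have hsub : (w - clipE κ w) i = w i - clipE κ w i := PiLp.sub_apply _ _ _ _
    have hcl : clipE κ w i = max 0 (min (w i) κ) := rfl
    obtain ⟨p1, p2, p3, p4⟩ := clip_scalar_comp κ (w i) hκ
    rw [hsub, hcl]
    refine ⟨fun h => p1 (by linarith), fun h => p2 (by linarith), p3, p4⟩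
  have hDpos : 0 ≤ (inner ℝ (D z1 - D z2) (y1 - y2) : ℝ) := by
    rw [PiLp.inner_apply]
    apply Finset.sum_nonneg
    intro i _
    have h1 : (D z1 - D z2) i = d i * z1 i - d i * z2 i := by
      rw [PiLp.sub_apply, hD, hD]
    have h2 : (y1 - y2) i = y1 i - y2 i := PiLp.sub_apply _ _ _ _
    rw [RCLike.inner_apply', h1, h2]
    simp only [starRingEnd_apply, star_trivial]
    have h3 : d i * z1 i - d i * z2 i = d i * (z1 i - z2 i) := by ring
    rw [h3, mul_assoc]
    apply mul_nonneg (hd i).le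
    obtain ⟨q1, q2, q3, q4⟩ := hcomp u' i
    obtain ⟨r1, r2, r3, r4⟩ := hcomp u i
    exact clip_sign κ (z1 i) (z2 i) (y1 i) (y2 i) q1 q2 r1 r2 q3 q4 r3 r4
  -- coercivity kills the difference of clipped parts
  have hinner0 :
      (inner ℝ (T y1 - T y2) (y1 - y2) : ℝ) + (inner ℝ (D z1 - D z2) (y1 - y2) : ℝ) = 0 := by
    rw [← inner_add_left, heqdiff, inner_zero_left]
  have hcoer12 : c₀ * ‖y1 - y2‖ ^ 2 ≤ (inner ℝ (T y1 - T y2) (y1 - y2) : ℝ) := by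
    rw [← map_sub]
    exact hcoerT (y1 - y2)
  have hy12 : y1 = y2 := by
    have hle : c₀ * ‖y1 - y2‖ ^ 2 ≤ 0 := by linarith
    have hsq : ‖y1 - y2‖ ^ 2 ≤ 0 := by nlinarith
    have hn : ‖y1 - y2‖ = 0 :=
      le_antisymm (by nlinarith [norm_nonneg (y1 - y2)]) (norm_nonneg _)
    rwa [norm_sub_eq_zero_iff] at hn
  have hz12 : z1 = z2 := by
    have hD12 : D z1 = D z2 := by
      have hT0 : T y1 - T y2 = 0 := by rw [hy12]; simp
      rw [hT0, zero_add] at heqdiff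
      exact sub_eq_zero.mp heqdiff
    ext i
    have hDi : D z1 i = D z2 i := by rw [hD12]
    have hdi : d i ≠ 0 := (hd i).ne'
    rw [hD, hD] at hDi
    exact mul_left_cancel₀ hdi hDi
  have h1 : u' = z1 + y1 := (sub_add_cancel u' y1).symm
  have h2 : u = z2 + y2 := (sub_add_cancel u y2).symm
  rw [h1, h2, hz12, hy12]
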